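/- Fix a basis {|j⟩} of A and p > 1, and define on unit vectors φ ∈ A⊗B the function g_p(φ) = (1/(1−p)) ln Σ_j ⟨j|φ^A|j⟩^p. Viewing φ as a real vector of the real and imaginary parts of its coefficients, the Euclidean norm of the gradient of g_p satisfies ‖∇g_p‖₂² ≤ (4p²/(p−1)²)·(dim A)^{1−1/p} at every point of the unit sphere. -/

import Mathlib

open scoped BigOperators

open Real in
lemma aux_key (a : ℕ) (p : ℝ) (hp : 1 < p) (x : Fin a → ℝ)
    (hx : ∀ j, 0 ≤ x j) (hsum : ∑ j, x j = 1) :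
    ∑ j, x j ^ (2 * p - 1) ≤ (a : ℝ) ^ (1 - 1/p) * (∑ j, x j ^ p) ^ 2 := by
  have hp0 : 0 < p := lt_trans one_pos hp
  have ha : 0 < a := by
    rcases Nat.eq_zero_or_pos a with h | h
    · subst h; simp at hsum
    · exact h
  have ha0 : (0:ℝ) < (a:ℝ) := by exact_mod_cast ha
  set S : ℝ := ∑ j, x j ^ p with hS
  have hSterm : ∀ j : Fin a, (0:ℝ) ≤ x j ^ p := fun j => rpow_nonneg (hx j) p
  -- lower bound on S
  have hSlb : (a : ℝ) ^ (1 - p) ≤ S := by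
    have hmean := Real.rpow_arith_mean_le_arith_mean_rpow Finset.univ
      (fun _ : Fin a => (a : ℝ)⁻¹) x (fun i _ => by positivity)
      (by simp [Finset.card_univ]; field_simp) (fun i _ => hx i) hp.le
    simp only [← Finset.mul_sum, hsum, mul_one] at hmean
    have h1 : ((a:ℝ)⁻¹) ^ p ≤ (a:ℝ)⁻¹ * S := hmean
    have h2 : (a : ℝ) ^ (1 - p) = (a:ℝ) * ((a:ℝ)⁻¹) ^ p := by
      rw [Real.rpow_sub ha0, Real.rpow_one, Real.inv_rpow ha0.le, div_eq_mul_inv]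
    rw [h2]
    calc (a:ℝ) * ((a:ℝ)⁻¹) ^ p ≤ (a:ℝ) * ((a:ℝ)⁻¹ * S) := by
          exact mul_le_mul_of_nonneg_left h1 ha0.le
      _ = S := by field_simp
  have hS0 : 0 < S := lt_of_lt_of_le (rpow_pos_of_pos ha0 _) hSlb
  -- step 1
  have step1 : ∑ j, x j ^ (2 * p - 1) ≤ S ^ (2 - 1/p) := by
    have hterm : ∀ j : Fin a, x j ^ (2 * p - 1) ≤ S ^ ((p-1)/p) * x j ^ p := by
      intro j
      rcases eq_or_lt_of_le (hx j) with h0 | h0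
      · rw [← h0, Real.zero_rpow (by nlinarith), Real.zero_rpow hp0.ne']
        simp
      · have hxp : x j ^ p ≤ S := Finset.single_le_sum (fun i _ => hSterm i) (Finset.mem_univ j)
        have : x j ^ (p - 1) ≤ S ^ ((p-1)/p) := by
          have : x j ^ (p - 1) = (x j ^ p) ^ ((p-1)/p) := by
            rw [← Real.rpow_mul (hx j)]
            congr 1; field_simp
          rw [this]
          exact Real.rpow_le_rpow (rpow_nonneg (hx j) p) hxp (div_nonneg (by linarith) hp0.le)
        calc x j ^ (2*p-1) = x j ^ (p-1) * x j ^ p := by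
              rw [← Real.rpow_add h0]; congr 1 <;> ring
          _ ≤ S ^ ((p-1)/p) * x j ^ p := mul_le_mul_of_nonneg_right this (hSterm j)
    calc ∑ j, x j ^ (2*p-1) ≤ ∑ j, S ^ ((p-1)/p) * x j ^ p :=
          Finset.sum_le_sum fun j _ => hterm j
      _ = S ^ ((p-1)/p) * S := by rw [← Finset.mul_sum]
      _ = S ^ (2 - 1/p) := by
          rw [← Real.rpow_add_one hS0.ne']
          congr 1 <;> field_simp <;> ring
  -- step 2
  have step2 : S ^ (2 - 1/p) ≤ (a:ℝ) ^ (1 - 1/p) * S ^ 2 := by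
    have h1 : S ^ (2 - 1/p) = S ^ 2 * S ^ (-(1/p)) := by
      rw [← Real.rpow_natCast S 2, ← Real.rpow_add hS0]
      congr 1 <;> push_cast <;> ring
    have h2 : S ^ (-(1/p)) ≤ ((a:ℝ) ^ (1-p)) ^ (-(1/p)) :=
      Real.rpow_le_rpow_of_nonpos (rpow_pos_of_pos ha0 _) hSlb (neg_nonpos.mpr (by positivity))
    have h3 : ((a:ℝ) ^ (1-p)) ^ (-(1/p)) = (a:ℝ) ^ (1 - 1/p) := by
      rw [← Real.rpow_mul ha0.le]
      congr 1 <;> field_simp <;> ring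
    rw [h1, mul_comm]
    exact mul_le_mul_of_nonneg_right (h3 ▸ h2) (by positivity)
  exact step1.trans step2

set_option maxHeartbeats 1000000 in
/-- For the dephased Rényi functional
g_p(t) = (1/(1−p)) ln Σ_j (Σ_{k,z} t_{jkz}²)^p on the unit sphere (viewing a
unit vector of A⊗B as the real vector of real/imaginary parts of its
coefficients), the gradient satisfies ‖∇g_p‖² ≤ (4p²/(p−1)²)·(dim A)^(1−1/p). -/
theorem dephased_renyi_gradient_bound
    (a b : ℕ) (ha : 0 < a) (hb : 0 < b) (p : ℝ) (hp : 1 < p)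
    (g : EuclideanSpace ℝ (Fin a × Fin b × Fin 2) → ℝ)
    (hg : g = fun t => (1 / (1 - p)) *
      Real.log (∑ j : Fin a, (∑ k : Fin b, ∑ z : Fin 2, (t (j, k, z)) ^ 2) ^ p))
    (t : EuclideanSpace ℝ (Fin a × Fin b × Fin 2)) (ht : ‖t‖ = 1) :
    ‖gradient g t‖ ^ 2 ≤ (4 * p ^ 2 / (p - 1) ^ 2) * (a : ℝ) ^ (1 - 1 / p) := by
  have hp0 : (0:ℝ) < p := lt_trans one_pos hp
  set x : Fin a → ℝ := fun j => ∑ k : Fin b, ∑ z : Fin 2, (t (j, k, z)) ^ 2 with hxdef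
  have hx0 : ∀ j, 0 ≤ x j := fun j => by positivity
  have hsum : ∑ j, x j = 1 := by
    have h1 : ∑ i : Fin a × Fin b × Fin 2, (t i) ^ 2 = 1 := by
      have := EuclideanSpace.norm_eq t
      rw [ht] at this
      have h2 : ∑ i, ‖t i‖ ^ 2 = 1 := by
        have h3 : Real.sqrt (∑ i, ‖t i‖ ^ 2) = 1 := this.symm
        nlinarith [Real.sq_sqrt (show (0:ℝ) ≤ ∑ i, ‖t i‖ ^ 2 by positivity)]
      simpa [Real.norm_eq_abs, sq_abs] using h2
    rw [Fintype.sum_prod_type] at h1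
    simp only [Fintype.sum_prod_type] at h1 ⊢
    exact h1
  set S : ℝ := ∑ j, x j ^ p with hSdef
  have hS0 : 0 < S := by
    obtain ⟨j, hj⟩ : ∃ j, 0 < x j := by
      by_contra h
      push_neg at h
      have : ∑ j, x j ≤ 0 := Finset.sum_nonpos fun j _ => h j
      linarith
    have h1 : (0:ℝ) < x j ^ p := Real.rpow_pos_of_pos hj p
    have h2 : x j ^ p ≤ S := Finset.single_le_sum
      (fun i _ => Real.rpow_nonneg (hx0 i) p) (Finset.mem_univ j)
    linarith
  -- the gradient
  set w : EuclideanSpace ℝ (Fin a × Fin b × Fin 2) :=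
    WithLp.toLp 2 (fun i => (1 / (1 - p)) * (S⁻¹ * ((p * x i.1 ^ (p - 1)) * (2 * t i)))) with hwdef
  have hproj : ∀ i, HasFDerivAt (𝕜 := ℝ)
      (fun s : EuclideanSpace ℝ (Fin a × Fin b × Fin 2) => s i)
      (EuclideanSpace.proj (𝕜 := ℝ) i) t := fun i =>
    (EuclideanSpace.proj (𝕜 := ℝ) i).hasFDerivAt (x := t)
  have hsq : ∀ i, HasFDerivAt (fun s : EuclideanSpace ℝ (Fin a × Fin b × Fin 2) => (s i) ^ 2)
      ((2 * t i) • EuclideanSpace.proj (𝕜 := ℝ) i) t := by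
    intro i
    have h := (hasDerivAt_pow 2 (t i)).comp_hasFDerivAt t (hproj i)
    rw [show (2 * t i) = ((2:ℕ):ℝ) * t i ^ (2-1) by push_cast; ring]
    exact h
  have hX : ∀ j, HasFDerivAt
      (fun s : EuclideanSpace ℝ (Fin a × Fin b × Fin 2) =>
        ∑ k : Fin b, ∑ z : Fin 2, (s (j, k, z)) ^ 2)
      (∑ k : Fin b, ∑ z : Fin 2, (2 * t (j, k, z)) • EuclideanSpace.proj (𝕜 := ℝ) (j, k, z)) t :=
    fun j => HasFDerivAt.fun_sum fun k _ => HasFDerivAt.fun_sum fun z _ => hsq (j, k, z)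
  have hrpow : ∀ j, HasFDerivAt
      (fun s : EuclideanSpace ℝ (Fin a × Fin b × Fin 2) =>
        (∑ k : Fin b, ∑ z : Fin 2, (s (j, k, z)) ^ 2) ^ p)
      ((p * x j ^ (p - 1)) •
        (∑ k : Fin b, ∑ z : Fin 2, (2 * t (j, k, z)) • EuclideanSpace.proj (𝕜 := ℝ) (j, k, z))) t :=
    fun j => by exact (Real.hasDerivAt_rpow_const (x := x j) (Or.inr hp.le)).comp_hasFDerivAt t (hX j)
  have hSder : HasFDerivAt
      (fun s : EuclideanSpace ℝ (Fin a × Fin b × Fin 2) =>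
        ∑ j : Fin a, (∑ k : Fin b, ∑ z : Fin 2, (s (j, k, z)) ^ 2) ^ p)
      (∑ j : Fin a, (p * x j ^ (p - 1)) •
        (∑ k : Fin b, ∑ z : Fin 2, (2 * t (j, k, z)) • EuclideanSpace.proj (𝕜 := ℝ) (j, k, z))) t :=
    HasFDerivAt.fun_sum fun j _ => hrpow j
  have hlog := (Real.hasDerivAt_log hS0.ne').comp_hasFDerivAt t hSder
  have hg' := hlog.const_mul (1 / (1 - p))
  have hD : HasFDerivAt g ((InnerProductSpace.toDual ℝ
      (EuclideanSpace ℝ (Fin a × Fin b × Fin 2))) w) t := by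
    rw [hg]
    refine hg'.congr_fderiv ?_
    symm
    apply ContinuousLinearMap.ext
    intro v
    rw [InnerProductSpace.toDual_apply_apply]
    simp only [PiLp.inner_apply, RCLike.inner_apply, conj_trivial,
      ContinuousLinearMap.smul_apply, ContinuousLinearMap.sum_apply,
      PiLp.proj_apply, smul_eq_mul, hwdef]
    rw [Fintype.sum_prod_type]
    simp only [Fintype.sum_prod_type, Finset.mul_sum]
    refine Finset.sum_congr rfl fun j _ => Finset.sum_congr rfl fun k _ =>
      Finset.sum_congr rfl fun z _ => by ring
  have hGrad : HasGradientAt g w t := hasGradientAt_iff_hasFDerivAt.mpr hD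
  have hgrad : gradient g t = w := hGrad.gradient
  rw [hgrad]
  have hnorm : ‖w‖ ^ 2 = ∑ i, (w i) ^ 2 := by
    rw [EuclideanSpace.norm_eq, Real.sq_sqrt (by positivity)]
    simp [Real.norm_eq_abs, sq_abs]
  rw [hnorm]
  have hterm : ∀ j : Fin a, (x j ^ (p - 1)) ^ 2 * x j = x j ^ (2 * p - 1) := by
    intro j
    rcases eq_or_lt_of_le (hx0 j) with h0 | h0
    · rw [← h0, Real.zero_rpow (by linarith), Real.zero_rpow (by nlinarith)]
      ring
    · rw [← Real.rpow_natCast (x j ^ (p - 1)) 2, ← Real.rpow_mul (hx0 j),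
        ← Real.rpow_add_one h0.ne']
      congr 1
      push_cast
      ring
  have hsum2 : ∑ i, (w i) ^ 2 =
      (4 * p ^ 2 / (p - 1) ^ 2) * S⁻¹ ^ 2 * ∑ j, x j ^ (2 * p - 1) := by
    simp only [Fintype.sum_prod_type, hwdef]
    rw [Finset.mul_sum]
    refine Finset.sum_congr rfl fun j _ => ?_
    have : ∑ k : Fin b, ∑ z : Fin 2,
        ((1 / (1 - p)) * (S⁻¹ * ((p * x j ^ (p - 1)) * (2 * t (j, k, z))))) ^ 2
        = (4 * p ^ 2 / (1 - p) ^ 2) * S⁻¹ ^ 2 * (x j ^ (p - 1)) ^ 2 *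
          (∑ k : Fin b, ∑ z : Fin 2, (t (j, k, z)) ^ 2) := by
      rw [Finset.mul_sum]
      refine Finset.sum_congr rfl fun k _ => ?_
      rw [Finset.mul_sum]
      refine Finset.sum_congr rfl fun z _ => ?_
      field_simp
      ring
    rw [this]
    have hxj : (∑ k : Fin b, ∑ z : Fin 2, (t (j, k, z)) ^ 2) = x j := rfl
    rw [hxj, mul_assoc, hterm j]
    try ring
  rw [hsum2]
  have hkey := aux_key a p hp x hx0 hsum
  have hpos : (0:ℝ) ≤ 4 * p ^ 2 / (p - 1) ^ 2 := by positivity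
  calc (4 * p ^ 2 / (p - 1) ^ 2) * S⁻¹ ^ 2 * ∑ j, x j ^ (2 * p - 1)
      ≤ (4 * p ^ 2 / (p - 1) ^ 2) * S⁻¹ ^ 2 * ((a : ℝ) ^ (1 - 1/p) * S ^ 2) := by
        apply mul_le_mul_of_nonneg_left hkey (by positivity)
    _ = (4 * p ^ 2 / (p - 1) ^ 2) * (a : ℝ) ^ (1 - 1/p) := by
        have hSS : S⁻¹ ^ 2 * S ^ 2 = 1 := by
          rw [← mul_pow, inv_mul_cancel₀ hS0.ne', one_pow]
        linear_combination (4 * p ^ 2 / (p - 1) ^ 2 * (a:ℝ) ^ (1 - 1/p)) * hSS
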